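/- Let w ∈ W̃ be GL-permissible and let i, j ∈ {1,…,2n} with j ∉ {i, i*}. Then: [either i < j and s_{i,j;0}w is GL-permissible, or j < i and s_{j,i;−1}w is GL-permissible] if and only if [the class of i mod 2n lies in K_j and the class of j−1 mod 2n does not lie in K_i]. -/

import Mathlib

open Finset

namespace OrthLM

/-- Membership in the cocharacter lattice `X` of the standard maximal torus of `GO_{2n}`:
integer vectors with `r_i + r_{i*}` independent of `i`. -/
def inX (n : ℕ) (v : Fin (2*n) → ℤ) : Prop :=
  ∀ i j : Fin (2*n), v i + v i.rev = v j + v j.rev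

/-- Membership in `S^h_{2n}`: permutations commuting with the involution `i ↦ i* = 2n+1-i`. -/
def inSh (n : ℕ) (σ : Equiv.Perm (Fin (2*n))) : Prop :=
  ∀ i, σ i.rev = (σ i).rev

/-- Membership in `W°`: elements of `S^h_{2n}` that are even as permutations. -/
def inW0 (n : ℕ) (σ : Equiv.Perm (Fin (2*n))) : Prop :=
  inSh n σ ∧ Equiv.Perm.sign σ = 1

/-- Elements of the ambient group of the Iwahori-Weyl group `W̃ = X ⋊ S^h_{2n}`,
represented as pairs (translation part, finite part). -/
abbrev Wt (n : ℕ) := (Fin (2*n) → ℤ) × Equiv.Perm (Fin (2*n))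

/-- Membership in the Iwahori-Weyl group `W̃ = X ⋊ S^h_{2n}`. -/
def inWt (n : ℕ) (w : Wt n) : Prop := inX n w.1 ∧ inSh n w.2

def wone (n : ℕ) : Wt n := (0, 1)

/-- Multiplication in `W̃` (compatible with the affine action `(v,σ)·x = v + σx`). -/
def wmul (n : ℕ) (w w' : Wt n) : Wt n :=
  (fun i => w.1 i + w'.1 (w.2⁻¹ i), w.2 * w'.2)

/-- Inversion in `W̃`. -/
def winv (n : ℕ) (w : Wt n) : Wt n := (fun i => -(w.1 (w.2 i)), w.2⁻¹)

/-- The translation element `t_μ`. -/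
def wtrans (n : ℕ) (μ : Fin (2*n) → ℤ) : Wt n := (μ, 1)

/-- A finite Weyl group element regarded in `W̃`. -/
def wperm (n : ℕ) (σ : Equiv.Perm (Fin (2*n))) : Wt n := (0, σ)

/-- The affine action of `W̃` on `ℤ^{2n}`: `(v,σ)·x = v + σx` with `(σx)(i) = x(σ⁻¹ i)`. -/
def wact (n : ℕ) (w : Wt n) (x : Fin (2*n) → ℤ) : Fin (2*n) → ℤ :=
  fun i => w.1 i + x (w.2⁻¹ i)

/-- The affine action of `W̃` on `ℝ^{2n}`. -/
def wactR (n : ℕ) (w : Wt n) (x : Fin (2*n) → ℝ) : Fin (2*n) → ℝ :=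
  fun i => (w.1 i : ℝ) + x (w.2⁻¹ i)

/-- The action of a permutation on vectors: `(σμ)(i) = μ(σ⁻¹ i)`. -/
def permAct (n : ℕ) (σ : Equiv.Perm (Fin (2*n))) (μ : Fin (2*n) → ℤ) : Fin (2*n) → ℤ :=
  fun i => μ (σ⁻¹ i)

/-- The cocharacter `μ₁ = (1^{(n)}, 0^{(n)})`. -/
def mu1 (n : ℕ) : Fin (2*n) → ℤ := fun j => if (j:ℕ) < n then 1 else 0

/-- The cocharacter `μ₂ = (1^{(n-1)}, 0, 1, 0^{(n-1)})`. -/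
def mu2 (n : ℕ) : Fin (2*n) → ℤ := fun j => if (j:ℕ) < n - 1 ∨ (j:ℕ) = n then 1 else 0

/-- The vertices `ω_k = ((-1)^{(k)}, 0^{(2n-k)})` of the standard extended alcove. -/
def om (n : ℕ) (k : ℕ) : Fin (2*n) → ℤ := fun j => if (j:ℕ) < k then -1 else 0

/-- The extended alcove `v_k = w·ω_k` of `w`. -/
def valc (n : ℕ) (w : Wt n) (k : ℕ) : Fin (2*n) → ℤ := wact n w (om n k)

/-- The vector `μ_k^w = v_k - ω_k`. -/
def muk (n : ℕ) (w : Wt n) (k : ℕ) : Fin (2*n) → ℤ :=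
  fun j => valc n w k j - om n k j

/-- The set `E_k^w = {j : μ_k^w(j) = 0}`. -/
def Ew (n : ℕ) (w : Wt n) (k : ℕ) : Finset (Fin (2*n)) :=
  univ.filter fun j => muk n w k j = 0

/-- `GL`-permissibility: `Σ v_0 = n` and `ω_k ≤ v_k ≤ ω_k + (1,…,1)` for `0 ≤ k ≤ 2n-1`. -/
def GLperm (n : ℕ) (w : Wt n) : Prop :=
  (∑ j, valc n w 0 j) = (n : ℤ) ∧
  ∀ k < 2*n, ∀ j, om n k j ≤ valc n w k j ∧ valc n w k j ≤ om n k j + 1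

/-- A vector `μ ∈ {0,1}^{2n}` is totally isotropic if `μ(j) + μ(j*) = 1` for all `j`. -/
def TotIso (n : ℕ) (μ : Fin (2*n) → ℤ) : Prop := ∀ j, μ j + μ j.rev = 1

/-- `μ`-spin-permissibility: `GL`-permissible and every totally isotropic `μ_k^w`
(for `0 ≤ k ≤ n`) lies in the `W°`-orbit of `μ`. -/
def SpinPerm (n : ℕ) (μ : Fin (2*n) → ℤ) (w : Wt n) : Prop :=
  GLperm n w ∧ ∀ k ≤ n, TotIso n (muk n w k) →
    ∃ σ, inW0 n σ ∧ muk n w k = permAct n σ μ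

/-- Membership in the coroot lattice `Q^∨`. -/
def inQv (n : ℕ) (v : Fin (2*n) → ℤ) : Prop :=
  inX n v ∧ (∀ i, v i + v i.rev = 0) ∧
  Even (∑ i ∈ univ.filter (fun i : Fin (2*n) => (i:ℕ) < n), v i)

/-- Membership in the affine Weyl group `W_a = Q^∨ ⋊ W°`. -/
def inWa (n : ℕ) (x : Wt n) : Prop := inQv n x.1 ∧ inW0 n x.2

/-- The affine reflection `s_{i,j;d}` (for `j ∉ {i, i*}`), sending `x` to the vector with
`x_j + d` in slot `i`, `x_i - d` in slot `j`, `x_{i*} + d` in slot `j*`, `x_{j*} - d` in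
slot `i*`. -/
def wrefl (n : ℕ) (i j : Fin (2*n)) (d : ℤ) : Wt n :=
  (fun l => if l = i then d else if l = j then -d else if l = j.rev then d
            else if l = i.rev then -d else 0,
   Equiv.swap i j * Equiv.swap i.rev j.rev)

/-- Successor modulo `2n` on representatives `{0,…,2n-1}` of `ℤ/2nℤ`. -/
def csucc (n : ℕ) (k : Fin (2*n)) : Fin (2*n) :=
  ⟨((k:ℕ) + 1) % (2*n), Nat.mod_lt _ k.pos⟩

/-- Predecessor modulo `2n`. -/
def cpred (n : ℕ) (k : Fin (2*n)) : Fin (2*n) :=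
  ⟨((k:ℕ) + (2*n - 1)) % (2*n), Nat.mod_lt _ k.pos⟩

/-- Negation modulo `2n`. -/
def cneg (n : ℕ) (k : Fin (2*n)) : Fin (2*n) :=
  ⟨(2*n - (k:ℕ)) % (2*n), Nat.mod_lt _ k.pos⟩

/-- The star involution on classes mod `2n`: the class of `m` goes to the class of
`m* = 2n+1-m`, i.e. `c ↦ 1 - c`. -/
def cstar (n : ℕ) (k : Fin (2*n)) : Fin (2*n) := csucc n (cneg n k)

/-- The representative in `{1,…,2n}` of a class mod `2n`. -/
def pv (n : ℕ) (k : Fin (2*n)) : ℕ := if (k:ℕ) = 0 then 2*n else (k:ℕ)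

/-- The cyclic interval `[a, b)` in `ℤ/2nℤ`. -/
def cyc (n : ℕ) (a b : Fin (2*n)) : Finset (Fin (2*n)) :=
  univ.filter fun k => ((k:ℕ) + 2*n - (a:ℕ)) % (2*n) < ((b:ℕ) + 2*n - (a:ℕ)) % (2*n)

/-- The set `K_m = {k ∈ ℤ/2nℤ : μ_k^w(m) = 0}` (indices `m` are 0-indexed: the slot `m`
corresponds to the paper's `m+1 ∈ {1,…,2n}`; classes are represented by `{0,…,2n-1}`). -/
def Kset (n : ℕ) (w : Wt n) (m : Fin (2*n)) : Finset (Fin (2*n)) :=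
  univ.filter fun k => muk n w (k:ℕ) m = 0

/-- The slot `m` is proper: `K_{m+1}` (paper indexing) is a cyclic interval `[m̃, m+1)`
with lower endpoint `m̃` different from the class of `m+1`. -/
def isProper (n : ℕ) (w : Wt n) (m : Fin (2*n)) : Prop :=
  ∃ mt, mt ≠ csucc n m ∧ Kset n w m = cyc n mt (csucc n m)

/-- The constraint cutting out `X ⊗ ℝ` inside `ℝ^{2n}`. -/
def inXR (n : ℕ) (x : Fin (2*n) → ℝ) : Prop :=
  ∀ i j : Fin (2*n), x i + x i.rev = x j + x j.rev

/-- The closure (in `X ⊗ ℝ`, lifted to `ℝ^{2n}`) of the preimage `Ã` of the base alcove: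
the points of `X ⊗ ℝ` on which every positive root `x_i - x_j`, `x_i + x_j - c(x)`
(`1 ≤ i < j ≤ n`) takes values in `[-1, 0]`. -/
def ClA (n : ℕ) : Set (Fin (2*n) → ℝ) :=
  {x | inXR n x ∧
       ∀ i j : Fin (2*n), i < j → (j:ℕ) < n →
         (-1 ≤ x i - x j ∧ x i - x j ≤ 0 ∧
          -1 ≤ x i + x j - (x i + x i.rev) ∧ x i + x j - (x i + x i.rev) ≤ 0)}

/-- The stabilizer `Ω` in `W̃` of the base alcove. -/
def inOmega (n : ℕ) (w : Wt n) : Prop :=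
  inWt n w ∧ (wactR n w) '' ClA n = ClA n

/-- The Coxeter generators of `W_a`: the reflections in the walls of the base alcove,
namely `s_{i,i+1;0}` for `1 ≤ i ≤ n-1`, `s_{n-1,n+1;0}`, and `s_{1,2n-1;-1}`
(paper 1-indexed; here 0-indexed). -/
def sgens (n : ℕ) (hn : 2 ≤ n) : Set (Wt n) :=
  {w | (∃ i : Fin (2*n), (i:ℕ) + 1 < n ∧ w = wrefl n i (csucc n i) 0) ∨
       w = wrefl n ⟨n-2, by omega⟩ ⟨n, by omega⟩ 0 ∨
       w = wrefl n ⟨0, by omega⟩ ⟨2*n-2, by omega⟩ (-1)}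

def wprod (n : ℕ) (L : List (Wt n)) : Wt n := L.foldr (wmul n) (wone n)

/-- A word in the Coxeter generators of `W_a`. -/
def isWord (n : ℕ) (hn : 2 ≤ n) (L : List (Wt n)) : Prop := ∀ s ∈ L, s ∈ sgens n hn

/-- The length function on `W̃`: `ℓ(xω) = ℓ(x)` for `x ∈ W_a`, `ω ∈ Ω`, where `ℓ(x)` is
the minimal length of a word in the Coxeter generators expressing `x`. -/
noncomputable def lenW (n : ℕ) (hn : 2 ≤ n) (w : Wt n) : ℕ :=
  sInf {m | ∃ L ω, isWord n hn L ∧ L.length = m ∧ inOmega n ω ∧ w = wmul n (wprod n L) ω}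

/-- The Bruhat order on `W̃`: `xω ≤ x'ω'` iff `ω = ω'` and `x ≤ x'` in `W_a`, the latter
expressed by the subword property for a reduced word of `x'`. -/
def wle (n : ℕ) (hn : 2 ≤ n) (w w' : Wt n) : Prop :=
  ∃ L ω, isWord n hn L ∧ inOmega n ω ∧ w' = wmul n (wprod n L) ω ∧
    L.length = lenW n hn w' ∧ ∃ L', L'.Sublist L ∧ w = wmul n (wprod n L') ω

/-- Strict Bruhat order on `W̃`. -/
def wlt (n : ℕ) (hn : 2 ≤ n) (w w' : Wt n) : Prop := wle n hn w w' ∧ w ≠ w'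

/-- The `μ`-admissible set `Adm°(μ)` for `G°`: `w ≤ σ t_μ σ⁻¹` for some `σ ∈ W°`. -/
def AdmO (n : ℕ) (hn : 2 ≤ n) (μ : Fin (2*n) → ℤ) (w : Wt n) : Prop :=
  ∃ σ, inW0 n σ ∧
    wle n hn w (wmul n (wperm n σ) (wmul n (wtrans n μ) (wperm n σ⁻¹)))

/-- The `μ`-admissible set `Adm(μ)` for `G`: `w ≤ σ t_μ σ⁻¹` for some `σ ∈ S^h_{2n}`. -/
def AdmFull (n : ℕ) (hn : 2 ≤ n) (μ : Fin (2*n) → ℤ) (w : Wt n) : Prop :=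
  ∃ σ, inSh n σ ∧
    wle n hn w (wmul n (wperm n σ) (wmul n (wtrans n μ) (wperm n σ⁻¹)))

/-- The element `τ = (n, n+1) ∈ S^h_{2n}` (paper 1-indexed). -/
def tau (n : ℕ) (hn : 2 ≤ n) : Equiv.Perm (Fin (2*n)) :=
  Equiv.swap ⟨n-1, by omega⟩ ⟨n, by omega⟩

lemma muk_eq (n : ℕ) (w : Wt n) (k : ℕ) (m : Fin (2*n)) :
    muk n w k m = w.1 m + (if ((w.2⁻¹ m : Fin (2*n)):ℕ) < k then (-1:ℤ) else 0)
      - (if (m:ℕ) < k then (-1:ℤ) else 0) := rfl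

lemma muk_step (n : ℕ) (w : Wt n) (k : ℕ) (m : Fin (2*n)) :
    muk n w (k+1) m = muk n w k m + (if (m:ℕ) = k then 1 else 0)
      - (if ((w.2⁻¹ m : Fin (2*n)):ℕ) = k then 1 else 0) := by
  simp only [muk_eq]; split_ifs <;> omega

lemma muk_top (n : ℕ) (w : Wt n) (m : Fin (2*n)) :
    muk n w (2*n) m = muk n w 0 m := by
  have h1 := (w.2⁻¹ m).isLt; have h2 := m.isLt
  simp only [muk_eq]; split_ifs <;> omega

lemma GLperm_iff (n : ℕ) (w : Wt n) : GLperm n w ↔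
    (∑ j, valc n w 0 j) = (n:ℤ) ∧ ∀ k < 2*n, ∀ j, 0 ≤ muk n w k j ∧ muk n w k j ≤ 1 := by
  unfold GLperm
  refine and_congr Iff.rfl (forall_congr' fun k => imp_congr Iff.rfl (forall_congr' fun m => ?_))
  unfold muk; omega

lemma muk_bounds (n : ℕ) (w : Wt n) (hGL : GLperm n w) :
    ∀ k ≤ 2*n, ∀ m : Fin (2*n), 0 ≤ muk n w k m ∧ muk n w k m ≤ 1 := by
  intro k hk m
  have h := (GLperm_iff n w).1 hGL
  rcases lt_or_eq_of_le hk with h' | h'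
  · exact h.2 k h' m
  · rw [h', muk_top]; exact h.2 0 m.pos m

lemma zero_prop (n : ℕ) (w : Wt n) (hGL : GLperm n w) (m : Fin (2*n)) (a b : ℕ)
    (hb : b ≤ 2*n) (h0 : muk n w a m = 0)
    (hne : ∀ k, a ≤ k → k < b → (m:ℕ) ≠ k) :
    ∀ k, a ≤ k → k ≤ b → muk n w k m = 0 := by
  intro k
  induction k with
  | zero =>
    intro hak _
    obtain rfl : a = 0 := by omega
    exact h0
  | succ k ih =>
    intro hak hkb
    rcases Nat.lt_or_ge k a with h | h
    · have : a = k + 1 := by omega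
      rw [← this]; exact h0
    · have hk0 := ih h (by omega)
      have hbd := (muk_bounds n w hGL (k+1) (by omega) m).1
      have hne' := hne k h (by omega)
      rw [muk_step] at hbd ⊢
      split_ifs at hbd ⊢ <;> omega

lemma one_prop (n : ℕ) (w : Wt n) (hGL : GLperm n w) (m : Fin (2*n)) (a b : ℕ)
    (hb : b ≤ 2*n) (h1 : muk n w b m = 1)
    (hne : ∀ k, a ≤ k → k < b → (m:ℕ) ≠ k) :
    ∀ k, a ≤ k → k ≤ b → muk n w k m = 1 := by
  suffices H : ∀ d k, k + d = b → a ≤ k → muk n w k m = 1 by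
    intro k hak hkb; exact H (b - k) k (by omega) hak
  intro d
  induction d with
  | zero =>
    intro k hk _
    obtain rfl : k = b := by omega
    exact h1
  | succ d ih =>
    intro k hk hak
    have h2 := ih (k+1) (by omega) (by omega)
    have hbd := (muk_bounds n w hGL k (by omega) m).2
    have hne' := hne k hak (by omega)
    rw [muk_step] at h2
    split_ifs at h2 <;> omega

lemma valc_zero (n : ℕ) (w : Wt n) (m : Fin (2*n)) : valc n w 0 m = w.1 m := by
  simp [valc, wact, om]

lemma pair_one (n : ℕ) (hn : 2 ≤ n) (w : Wt n) (hw : inWt n w)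
    (hsum : ∑ j, valc n w 0 j = (n:ℤ)) : ∀ m, w.1 m + w.1 m.rev = 1 := by
  intro m
  have hsum' : ∑ j, w.1 j = (n:ℤ) := by
    rw [← hsum]; exact Finset.sum_congr rfl fun j _ => (valc_zero n w j).symm
  have hrev : ∑ j : Fin (2*n), w.1 j.rev = ∑ j, w.1 j := by
    exact Fintype.sum_equiv (Fin.revPerm) _ _ (fun j => rfl)
  have h3 : ∑ _j : Fin (2*n), (w.1 m + w.1 m.rev) = ∑ j : Fin (2*n), (w.1 j + w.1 j.rev) :=
    Finset.sum_congr rfl fun j _ => hw.1 m j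
  rw [Finset.sum_const, Finset.card_univ, Fintype.card_fin, Finset.sum_add_distrib,
    hrev, hsum', nsmul_eq_mul] at h3
  have hne : ((2*n : ℕ) : ℤ) ≠ 0 := by exact_mod_cast (by omega : (2*n : ℕ) ≠ 0)
  refine mul_left_cancel₀ hne ?_
  rw [mul_one, h3]; push_cast; ring

lemma sigma_inv_rev (n : ℕ) (w : Wt n) (hsh : inSh n w.2) (m : Fin (2*n)) :
    w.2⁻¹ m.rev = (w.2⁻¹ m).rev := by
  have h := hsh (w.2⁻¹ m)
  rw [show w.2 (w.2⁻¹ m) = m from Equiv.apply_symm_apply w.2 m] at h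
  rw [← h]; exact Equiv.symm_apply_apply w.2 _

lemma muk_rev (n : ℕ) (w : Wt n) (hsh : inSh n w.2)
    (hc : ∀ m, w.1 m + w.1 m.rev = 1) (k : ℕ) (hk : k ≤ 2*n) (m : Fin (2*n)) :
    muk n w k m.rev = 1 - muk n w (2*n - k) m := by
  simp only [muk_eq, sigma_inv_rev n w hsh, Fin.val_rev]
  have h1 := (w.2⁻¹ m).isLt; have h2 := m.isLt
  have hcm := hc m
  split_ifs <;> omega

lemma muk_mul (n : ℕ) (u w : Wt n) (k : ℕ) (m : Fin (2*n)) :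
    muk n (wmul n u w) k m =
      u.1 m + muk n w k (u.2⁻¹ m) + om n k (u.2⁻¹ m) - om n k m := by
  simp only [muk, valc, wact, wmul, mul_inv_rev, Equiv.Perm.mul_apply]
  ring

lemma rev_ne_self (n : ℕ) (x : Fin (2*n)) : x.rev ≠ x := by
  intro h
  have h1 := x.isLt
  have h2 : (x.rev : ℕ) = (x:ℕ) := by rw [h]
  rw [Fin.val_rev] at h2
  omega

lemma muk_refl (n : ℕ) (w : Wt n) (a b : Fin (2*n)) (hba : b ≠ a) (hbar : b ≠ a.rev)
    (d : ℤ) (k : ℕ) (m : Fin (2*n)) :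
    muk n (wmul n (wrefl n a b d) w) k m =
      if m = a then d + muk n w k b + om n k b - om n k a
      else if m = b then -d + muk n w k a + om n k a - om n k b
      else if m = b.rev then d + muk n w k a.rev + om n k a.rev - om n k b.rev
      else if m = a.rev then -d + muk n w k b.rev + om n k b.rev - om n k a.rev
      else muk n w k m := by
  have hab : a ≠ b := hba.symm
  have haar : a ≠ a.rev := (rev_ne_self n a).symm
  have hbbr : b ≠ b.rev := (rev_ne_self n b).symm
  have habr : a ≠ b.rev := fun h => hbar (by rw [h, Fin.rev_rev])
  have hbra : b.rev ≠ a := Ne.symm habr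
  have hbrb : b.rev ≠ b := rev_ne_self n b
  have hara : a.rev ≠ a := rev_ne_self n a
  have harb : a.rev ≠ b := Ne.symm hbar
  have harbr : a.rev ≠ b.rev := fun h => hab (Fin.rev_injective h)
  have hsinv : (wrefl n a b d).2⁻¹ = Equiv.swap a.rev b.rev * Equiv.swap a b := by
    simp [wrefl, mul_inv_rev, Equiv.swap_inv]
  rw [muk_mul, hsinv]
  by_cases hma : m = a
  · rw [hma, if_pos rfl]
    have e1 : (Equiv.swap a.rev b.rev * Equiv.swap a b) a = b := by
      rw [Equiv.Perm.mul_apply, Equiv.swap_apply_left, Equiv.swap_apply_of_ne_of_ne hbar hbbr]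
    have e2 : (wrefl n a b d).1 a = d := by simp [wrefl]
    rw [e1, e2]
  · by_cases hmb : m = b
    · rw [hmb, if_neg hba, if_pos rfl]
      have e1 : (Equiv.swap a.rev b.rev * Equiv.swap a b) b = a := by
        rw [Equiv.Perm.mul_apply, Equiv.swap_apply_right, Equiv.swap_apply_of_ne_of_ne haar habr]
      have e2 : (wrefl n a b d).1 b = -d := by simp [wrefl, hba]
      rw [e1, e2]
    · by_cases hmbr : m = b.rev
      · rw [hmbr, if_neg hbra, if_neg hbrb, if_pos rfl]
        have e1 : (Equiv.swap a.rev b.rev * Equiv.swap a b) b.rev = a.rev := by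
          rw [Equiv.Perm.mul_apply, Equiv.swap_apply_of_ne_of_ne hbra hbrb, Equiv.swap_apply_right]
        have e2 : (wrefl n a b d).1 b.rev = d := by simp [wrefl, hbra, hbrb]
        rw [e1, e2]
      · by_cases hmar : m = a.rev
        · rw [hmar, if_neg hara, if_neg harb, if_neg harbr, if_pos rfl]
          have e1 : (Equiv.swap a.rev b.rev * Equiv.swap a b) a.rev = b.rev := by
            rw [Equiv.Perm.mul_apply, Equiv.swap_apply_of_ne_of_ne hara harb, Equiv.swap_apply_left]
          have e2 : (wrefl n a b d).1 a.rev = -d := by simp [wrefl, hara, harb, harbr]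
          rw [e1, e2]
        · rw [if_neg hma, if_neg hmb, if_neg hmbr, if_neg hmar]
          have e1 : (Equiv.swap a.rev b.rev * Equiv.swap a b) m = m := by
            rw [Equiv.Perm.mul_apply, Equiv.swap_apply_of_ne_of_ne hma hmb,
              Equiv.swap_apply_of_ne_of_ne hmar hmbr]
          have e2 : (wrefl n a b d).1 m = 0 := by simp [wrefl, hma, hmb, hmbr, hmar]
          rw [e1, e2]; ring

lemma sum_wrefl_fst (n : ℕ) (a b : Fin (2*n)) (hba : b ≠ a) (hbar : b ≠ a.rev) (d : ℤ) :
    ∑ m, (wrefl n a b d).1 m = 0 := by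
  have hab : a ≠ b := hba.symm
  have haar : a ≠ a.rev := (rev_ne_self n a).symm
  have hbbr : b ≠ b.rev := (rev_ne_self n b).symm
  have habr : a ≠ b.rev := fun h => hbar (by rw [h, Fin.rev_rev])
  have hbra : b.rev ≠ a := Ne.symm habr
  have hbrb : b.rev ≠ b := rev_ne_self n b
  have hara : a.rev ≠ a := rev_ne_self n a
  have harb : a.rev ≠ b := Ne.symm hbar
  have harbr : a.rev ≠ b.rev := fun h => hab (Fin.rev_injective h)
  have key : ∀ m : Fin (2*n), (wrefl n a b d).1 m =
      (if m = a then d else 0) + (if m = b then -d else 0) +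
      (if m = b.rev then d else 0) + (if m = a.rev then -d else 0) := by
    intro m
    by_cases h1 : m = a
    · subst h1; simp [wrefl, hab, habr, haar]
    · by_cases h2 : m = b
      · subst h2; simp [wrefl, hba, hbbr, hbar]
      · by_cases h3 : m = b.rev
        · subst h3; simp [wrefl, hbra, hbrb, harbr.symm]
        · by_cases h4 : m = a.rev
          · subst h4; simp [wrefl, hara, harb, harbr]
          · simp [wrefl, h1, h2, h3, h4]
  simp only [key]
  simp [Finset.sum_add_distrib, Finset.sum_ite_eq']

lemma sum_valc_refl (n : ℕ) (w : Wt n) (a b : Fin (2*n)) (hba : b ≠ a)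
    (hbar : b ≠ a.rev) (d : ℤ) :
    ∑ m, valc n (wmul n (wrefl n a b d) w) 0 m = ∑ m, valc n w 0 m := by
  simp only [valc_zero, wmul]
  rw [Finset.sum_add_distrib]
  have h2 : ∑ m, w.1 ((wrefl n a b d).2⁻¹ m) = ∑ m, w.1 m :=
    Equiv.sum_comp ((wrefl n a b d).2⁻¹) w.1
  rw [h2, sum_wrefl_fst n a b hba hbar d, zero_add]

/-- (Lemma on reflections and GL-permissibility.) Let `w ∈ W̃` be
GL-permissible and `i, j` slots with `j ∉ {i, i*}` (0-indexed; paper indices are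
`i+1, j+1 ∈ {1,…,2n}`).  Then: either `i < j` and `s_{i,j;0}w` is GL-permissible, or
`j < i` and `s_{j,i;-1}w` is GL-permissible, iff the class of `i+1` mod `2n` lies in
`K_{j+1}` and the class of `j` mod `2n` does not lie in `K_{i+1}`. -/
theorem refl_GL_permissible_iff (n : ℕ) (hn : 2 ≤ n) (w : Wt n)
    (hw : inWt n w) (hGL : GLperm n w)
    (i j : Fin (2*n)) (hji : j ≠ i) (hjis : j ≠ i.rev) :
    ((i < j ∧ GLperm n (wmul n (wrefl n i j 0) w)) ∨
     (j < i ∧ GLperm n (wmul n (wrefl n j i (-1)) w))) ↔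
    (csucc n i ∈ Kset n w j ∧ j ∉ Kset n w i) := by
  have hB := muk_bounds n w hGL
  have hc : ∀ m, w.1 m + w.1 m.rev = 1 := pair_one n hn w hw hGL.1
  have hsh := hw.2
  have hvi := i.isLt
  have hvj := j.isLt
  have hrvi : (i.rev : ℕ) = 2*n - ((i:ℕ)+1) := Fin.val_rev i
  have hrvj : (j.rev : ℕ) = 2*n - ((j:ℕ)+1) := Fin.val_rev j
  have hij' : i ≠ j := Ne.symm hji
  have hijr : i ≠ j.rev := fun h => hjis (by rw [h, Fin.rev_rev])
  have hKj : (csucc n i ∈ Kset n w j) ↔ muk n w (((i:ℕ)+1) % (2*n)) j = 0 := by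
    simp [Kset, csucc]
  have hKi : (j ∈ Kset n w i) ↔ muk n w (j:ℕ) i = 0 := by simp [Kset]
  rcases lt_trichotomy i j with hij | hij | hij
  · -- case i < j
    have hvij : (i:ℕ) < (j:ℕ) := hij
    have hmod : ((i:ℕ)+1) % (2*n) = (i:ℕ)+1 := Nat.mod_eq_of_lt (by omega)
    constructor
    · rintro (⟨-, hG⟩ | ⟨hlt, -⟩)
      · have hG' := ((GLperm_iff _ _).1 hG).2
        have hm1 := hG' ((i:ℕ)+1) (by omega) i
        rw [muk_refl n w i j hji hjis 0, if_pos rfl] at hm1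
        simp only [om] at hm1
        rw [if_neg (by omega), if_pos (by omega)] at hm1
        have hBj := hB ((i:ℕ)+1) (by omega) j
        have hm2 := hG' (j:ℕ) (by omega) j
        rw [muk_refl n w i j hji hjis 0, if_neg hji, if_pos rfl] at hm2
        simp only [om] at hm2
        rw [if_pos (by omega), if_neg (by omega)] at hm2
        have hBi := hB (j:ℕ) (by omega) i
        refine ⟨hKj.mpr ?_, fun hmem => ?_⟩
        · rw [hmod]; omega
        · have := hKi.1 hmem; omega
      · exact absurd hlt (lt_asymm hij)
    · rintro ⟨h1, h2⟩
      rw [hKj, hmod] at h1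
      have h2' : muk n w (j:ℕ) i = 1 := by
        have := hB (j:ℕ) (by omega) i
        have hne0 : muk n w (j:ℕ) i ≠ 0 := fun h => h2 (hKi.mpr h)
        omega
      have hz : ∀ k, (i:ℕ) < k → k ≤ (j:ℕ) → muk n w k j = 0 :=
        fun k hk1 hk2 => zero_prop n w hGL j ((i:ℕ)+1) (j:ℕ) (by omega) h1
          (fun l hl1 hl2 => by omega) k (by omega) hk2
      have ho : ∀ k, (i:ℕ) < k → k ≤ (j:ℕ) → muk n w k i = 1 :=
        fun k hk1 hk2 => one_prop n w hGL i ((i:ℕ)+1) (j:ℕ) (by omega) h2'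
          (fun l hl1 hl2 => by omega) k (by omega) hk2
      refine Or.inl ⟨hij, (GLperm_iff _ _).2 ⟨?_, ?_⟩⟩
      · rw [sum_valc_refl n w i j hji hjis 0]; exact hGL.1
      · intro k hk m
        have hBk := hB k (by omega)
        rw [muk_refl n w i j hji hjis 0]
        by_cases hma : m = i
        · rw [if_pos hma]
          simp only [om]
          have hBj := hBk j
          split_ifs with hc1 hc2 hc2
          · omega
          · omega
          · have := hz k hc2 (by omega); omega
          · omega
        · rw [if_neg hma]
          by_cases hmb : m = j
          · rw [if_pos hmb]
            simp only [om]
            have hBi := hBk i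
            split_ifs with hc1 hc2 hc2
            · omega
            · have := ho k hc1 (by omega); omega
            · omega
            · omega
          · rw [if_neg hmb]
            by_cases hmbr : m = j.rev
            · rw [if_pos hmbr]
              simp only [om]
              have hrv : muk n w k i.rev = 1 - muk n w (2*n - k) i :=
                muk_rev n w hsh hc k (by omega) i
              have hBir := hBk i.rev
              split_ifs with hc1 hc2 hc2
              · omega
              · omega
              · have := ho (2*n - k) (by omega) (by omega); omega
              · omega
            · rw [if_neg hmbr]
              by_cases hmar : m = i.rev
              · rw [if_pos hmar]
                simp only [om]
                have hrv : muk n w k j.rev = 1 - muk n w (2*n - k) j :=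
                  muk_rev n w hsh hc k (by omega) j
                have hBjr := hBk j.rev
                split_ifs with hc1 hc2 hc2
                · omega
                · have := hz (2*n - k) (by omega) (by omega); omega
                · omega
                · omega
              · rw [if_neg hmar]; exact hBk m
  · exact absurd hij.symm hji
  · -- case j < i
    have hvij : (j:ℕ) < (i:ℕ) := hij
    constructor
    · rintro (⟨hlt, -⟩ | ⟨-, hG⟩)
      · exact absurd hlt (lt_asymm hij)
      · have hG' := ((GLperm_iff _ _).1 hG).2
        have hm2 := hG' (j:ℕ) (by omega) j
        rw [muk_refl n w j i hij' hijr (-1), if_pos rfl] at hm2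
        simp only [om] at hm2
        rw [if_neg (by omega), if_neg (by omega)] at hm2
        have hBi := hB (j:ℕ) (by omega) i
        have hKj0 : muk n w (((i:ℕ)+1) % (2*n)) j = 0 := by
          by_cases hi2 : (i:ℕ)+1 < 2*n
          · rw [Nat.mod_eq_of_lt (by omega)]
            have hm1 := hG' ((i:ℕ)+1) (by omega) i
            rw [muk_refl n w j i hij' hijr (-1), if_neg hij', if_pos rfl] at hm1
            simp only [om] at hm1
            rw [if_pos (by omega), if_pos (by omega)] at hm1
            have hBj := hB ((i:ℕ)+1) (by omega) j
            omega
          · rw [show ((i:ℕ)+1) = 2*n by omega, Nat.mod_self]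
            have hm1 := hG' 0 (by omega) i
            rw [muk_refl n w j i hij' hijr (-1), if_neg hij', if_pos rfl] at hm1
            simp only [om] at hm1
            rw [if_neg (by omega), if_neg (by omega)] at hm1
            have hBj := hB 0 (by omega) j
            omega
        refine ⟨hKj.mpr hKj0, fun hmem => ?_⟩
        have := hKi.1 hmem; omega
    · rintro ⟨h1, h2⟩
      rw [hKj] at h1
      have h2' : muk n w (j:ℕ) i = 1 := by
        have := hB (j:ℕ) (by omega) i
        have hne0 : muk n w (j:ℕ) i ≠ 0 := fun h => h2 (hKi.mpr h)
        omega
      obtain ⟨hz1, h00⟩ : (∀ k, (i:ℕ)+1 ≤ k → k ≤ 2*n → muk n w k j = 0) ∧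
          muk n w 0 j = 0 := by
        by_cases hi2 : (i:ℕ)+1 < 2*n
        · rw [Nat.mod_eq_of_lt (by omega)] at h1
          have hz1 : ∀ k, (i:ℕ)+1 ≤ k → k ≤ 2*n → muk n w k j = 0 :=
            fun k hk1 hk2 => zero_prop n w hGL j ((i:ℕ)+1) (2*n) le_rfl h1
              (fun l hl1 hl2 => by omega) k hk1 hk2
          exact ⟨hz1, by rw [← muk_top]; exact hz1 (2*n) (by omega) le_rfl⟩
        · rw [show ((i:ℕ)+1) = 2*n by omega, Nat.mod_self] at h1
          refine ⟨fun k hk1 hk2 => ?_, h1⟩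
          obtain rfl : k = 2*n := by omega
          rw [muk_top]; exact h1
      have hz0 : ∀ k ≤ (j:ℕ), muk n w k j = 0 :=
        fun k hk => zero_prop n w hGL j 0 (j:ℕ) (by omega) h00
          (fun l hl1 hl2 => by omega) k (Nat.zero_le _) hk
      have ho0 : ∀ k ≤ (j:ℕ), muk n w k i = 1 :=
        fun k hk => one_prop n w hGL i 0 (j:ℕ) (by omega) h2'
          (fun l hl1 hl2 => by omega) k (Nat.zero_le _) hk
      have h2ni : muk n w (2*n) i = 1 := by rw [muk_top]; exact ho0 0 (Nat.zero_le _)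
      have ho1 : ∀ k, (i:ℕ)+1 ≤ k → k ≤ 2*n → muk n w k i = 1 :=
        fun k hk1 hk2 => one_prop n w hGL i ((i:ℕ)+1) (2*n) le_rfl h2ni
          (fun l hl1 hl2 => by omega) k hk1 hk2
      refine Or.inr ⟨hij, (GLperm_iff _ _).2 ⟨?_, ?_⟩⟩
      · rw [sum_valc_refl n w j i hij' hijr (-1)]; exact hGL.1
      · intro k hk m
        have hBk := hB k (by omega)
        rw [muk_refl n w j i hij' hijr (-1)]
        by_cases hma : m = j
        · rw [if_pos hma]
          simp only [om]
          have hBi := hBk i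
          split_ifs with hc1 hc2 hc2
          · have := ho1 k (by omega) (by omega); omega
          · omega
          · omega
          · have := ho0 k (by omega); omega
        · rw [if_neg hma]
          by_cases hmb : m = i
          · rw [if_pos hmb]
            simp only [om]
            have hBj := hBk j
            split_ifs with hc1 hc2 hc2
            · have := hz1 k (by omega) (by omega); omega
            · omega
            · omega
            · have := hz0 k (by omega); omega
          · rw [if_neg hmb]
            by_cases hmbr : m = i.rev
            · rw [if_pos hmbr]
              simp only [om]
              have hrv : muk n w k j.rev = 1 - muk n w (2*n - k) j :=
                muk_rev n w hsh hc k (by omega) j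
              have hBjr := hBk j.rev
              split_ifs with hc1 hc2 hc2
              · have := hz0 (2*n - k) (by omega); omega
              · omega
              · omega
              · have := hz1 (2*n - k) (by omega) (by omega); omega
            · rw [if_neg hmbr]
              by_cases hmar : m = j.rev
              · rw [if_pos hmar]
                simp only [om]
                have hrv : muk n w k i.rev = 1 - muk n w (2*n - k) i :=
                  muk_rev n w hsh hc k (by omega) i
                have hBir := hBk i.rev
                split_ifs with hc1 hc2 hc2
                · have := ho0 (2*n - k) (by omega); omega
                · omega
                · omega
                · have := ho1 (2*n - k) (by omega) (by omega); omega
              · rw [if_neg hmar]; exact hBk m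


end OrthLM
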